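/- arXiv:1406.0578 — 4 statements merged into one kernel-verified Lean document; each statement's English description precedes it below -/
import Mathlib

section
/- Let X and Y be Hilbert spaces, T : X → Y a bounded linear operator with a least-squares projection approximation {(X_n, T_n)}. Then the LPA has kernel approximability if and only if the graphs converge: s-lim_{n→∞} G(T_n†) = w-lim̃_{n→∞} G(T_n†) = G(T†) in the product Hilbert space Y × X, where G(T†) = {(y,x) ∈ Y × X : x ∈ N(T)^⊥ and Tx = P_{cl R(T)} y} and G(T_n†) = {(y,x) ∈ Y × X : x ∈ N(T_n)^⊥ and T_n x = P_{T(X_n)} y}. -/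
open Filter Topology Metric Submodule ContinuousLinearMap

/-- Orthogonal projection onto a subspace `K` (as an operator `H →L[ℝ] H`),
defined whenever `K` admits orthogonal projections (e.g. `K` closed). -/
noncomputable def orthProj {H : Type*} [NormedAddCommGroup H] [InnerProductSpace ℝ H]
    (K : Submodule ℝ H) : H →L[ℝ] H :=
  open scoped Classical in
  if h : HasOrthogonalProjection K then
    haveI := h
    K.subtypeL.comp (orthogonalProjection K)
  else 0

variable {X Y : Type*} [NormedAddCommGroup X] [InnerProductSpace ℝ X] [CompleteSpace X]
  [NormedAddCommGroup Y] [InnerProductSpace ℝ Y] [CompleteSpace Y]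

section Helpers
open scoped RealInnerProductSpace

variable {H : Type*} [NormedAddCommGroup H] [InnerProductSpace ℝ H]

theorem orthProj_apply (K : Submodule ℝ H) [h : HasOrthogonalProjection K] (x : H) :
    orthProj K x = (orthogonalProjection K x : H) := by
  rw [orthProj, dif_pos h]; rfl

theorem orthProj_mem (K : Submodule ℝ H) [HasOrthogonalProjection K] (x : H) :
    orthProj K x ∈ K := by
  rw [orthProj_apply]; exact (orthogonalProjection K x).2

theorem sub_orthProj_mem (K : Submodule ℝ H) [HasOrthogonalProjection K] (x : H) :
    x - orthProj K x ∈ Kᗮ := by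
  rw [orthProj_apply]; exact K.sub_starProjection_mem_orthogonal x

theorem orthProj_eq_of {K : Submodule ℝ H} [HasOrthogonalProjection K] {x z : H}
    (hz : z ∈ K) (h : x - z ∈ Kᗮ) : orthProj K x = z := by
  rw [orthProj_apply]; exact eq_starProjection_of_mem_orthogonal hz h

theorem orthProj_eq_self {K : Submodule ℝ H} [HasOrthogonalProjection K] {x : H}
    (h : x ∈ K) : orthProj K x = x :=
  orthProj_eq_of h (by simpa using Submodule.zero_mem _)

theorem orthProj_eq_zero {K : Submodule ℝ H} [HasOrthogonalProjection K] {x : H}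
    (h : x ∈ Kᗮ) : orthProj K x = 0 :=
  orthProj_eq_of (Submodule.zero_mem _) (by simpa using h)

theorem norm_orthProj_le (K : Submodule ℝ H) [HasOrthogonalProjection K] (x : H) :
    ‖orthProj K x‖ ≤ ‖x‖ := by
  rw [orthProj_apply]
  have h1 : ‖orthogonalProjection K x‖ ≤ ‖orthogonalProjection K‖ * ‖x‖ :=
    (orthogonalProjection K).le_opNorm x
  have h2 : ‖orthogonalProjection K‖ * ‖x‖ ≤ 1 * ‖x‖ :=
    mul_le_mul_of_nonneg_right (orthogonalProjection_norm_le K) (norm_nonneg _)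
  rw [Submodule.norm_coe]
  linarith

theorem tendsto_inner_weak_strong {v : ℕ → H} {w : H} {C : ℝ}
    (hC : ∀ n, ‖v n‖ ≤ C)
    (hweak : ∀ q : H, Tendsto (fun n => ⟪v n, q⟫) atTop (𝓝 ⟪w, q⟫))
    {z : ℕ → H} {z0 : H} (hz : Tendsto z atTop (𝓝 z0)) :
    Tendsto (fun n => ⟪v n, z n⟫) atTop (𝓝 ⟪w, z0⟫) := by
  have h1 : Tendsto (fun n => ⟪v n, z n - z0⟫) atTop (𝓝 0) := by
    have hz0 : Tendsto (fun n => C * ‖z n - z0‖) atTop (𝓝 0) := by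
      have := (tendsto_sub_nhds_zero_iff.mpr hz).norm
      simpa using tendsto_const_nhds.mul this
    apply squeeze_zero_norm (fun n => ?_) hz0
    calc ‖⟪v n, z n - z0⟫‖ ≤ ‖v n‖ * ‖z n - z0‖ := abs_real_inner_le_norm _ _
      _ ≤ C * ‖z n - z0‖ := mul_le_mul_of_nonneg_right (hC n) (norm_nonneg _)
  have h2 := h1.add (hweak z0)
  simpa [inner_sub_right, sub_add_cancel] using h2

theorem exists_bound_of_weak [CompleteSpace H] {v : ℕ → H} {w : H}
    (hweak : ∀ q : H, Tendsto (fun n => ⟪v n, q⟫) atTop (𝓝 ⟪w, q⟫)) :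
    ∃ C, 0 ≤ C ∧ ∀ n, ‖v n‖ ≤ C := by
  have hpt : ∀ q : H, ∃ C, ∀ n,
      ‖(InnerProductSpace.toDual ℝ H (v n) : H →L[ℝ] ℝ) q‖ ≤ C := by
    intro q
    have habs : Tendsto (fun n => |⟪v n, q⟫|) atTop (𝓝 |⟪w, q⟫|) := (hweak q).abs
    obtain ⟨C, hC⟩ := habs.bddAbove_range
    refine ⟨C, fun n => ?_⟩
    have h2 : |⟪v n, q⟫| ≤ C := hC (Set.mem_range_self n)
    simpa [InnerProductSpace.toDual_apply_apply, Real.norm_eq_abs] using h2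
  obtain ⟨C, hC⟩ := banach_steinhaus hpt
  refine ⟨max C 0, le_max_right _ _, fun n => ?_⟩
  have h1 : ‖InnerProductSpace.toDual ℝ H (v n)‖ = ‖v n‖ :=
    (InnerProductSpace.toDual ℝ H).norm_map (v n)
  calc ‖v n‖ = ‖InnerProductSpace.toDual ℝ H (v n)‖ := h1.symm
    _ ≤ C := hC n
    _ ≤ max C 0 := le_max_left _ _

end Helpers

section WeakCompact
open scoped RealInnerProductSpace
open Filter Topology Metric Submodule

variable {H : Type*} [NormedAddCommGroup H] [InnerProductSpace ℝ H] [CompleteSpace H]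

theorem exists_weak_subseq (v : ℕ → H) (C : ℝ) (hC : ∀ n, ‖v n‖ ≤ C) :
    ∃ (φ : ℕ → ℕ) (w : H), StrictMono φ ∧
      ∀ q : H, Tendsto (fun j => ⟪v (φ j), q⟫) atTop (𝓝 ⟪w, q⟫) := by
  have hC0 : 0 ≤ C := le_trans (norm_nonneg (v 0)) (hC 0)
  have hcomp : IsCompact (Set.univ.pi fun _ : ℕ => Set.Icc (-(C*C)) (C*C)) :=
    isCompact_univ_pi fun _ => isCompact_Icc
  have hmem : ∀ n, (fun i => ⟪v n, v i⟫) ∈ (Set.univ.pi fun _ : ℕ => Set.Icc (-(C*C)) (C*C)) := by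
    intro n
    rw [Set.mem_univ_pi]
    intro i
    have h1 := abs_real_inner_le_norm (v n) (v i)
    have hb : ‖v n‖ * ‖v i‖ ≤ C * C := mul_le_mul (hC n) (hC i) (norm_nonneg _) hC0
    have h2 := neg_abs_le (⟪v n, v i⟫)
    have h3 := le_abs_self (⟪v n, v i⟫)
    exact ⟨by linarith, by linarith⟩
  obtain ⟨a, -, φ, hφ, hconv⟩ := hcomp.tendsto_subseq hmem
  have hpt : ∀ i, Tendsto (fun j => ⟪v (φ j), v i⟫) atTop (𝓝 (a i)) := fun i =>
    tendsto_pi_nhds.1 hconv i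
  set M := (Submodule.span ℝ (Set.range v)).topologicalClosure with hM
  haveI : CompleteSpace M := (Submodule.isClosed_topologicalClosure _).completeSpace_coe
  have hvM : ∀ n, v n ∈ M := fun n =>
    (Submodule.le_topologicalClosure _) (Submodule.subset_span (Set.mem_range_self n))
  have hspan : ∀ z ∈ Submodule.span ℝ (Set.range v),
      ∃ c, Tendsto (fun j => ⟪v (φ j), z⟫) atTop (𝓝 c) := by
    intro z hz
    induction hz using Submodule.span_induction with
    | mem x hx =>
      obtain ⟨i, rfl⟩ := hx
      exact ⟨a i, hpt i⟩
    | zero => exact ⟨0, by simpa using (tendsto_const_nhds : Tendsto (fun _ : ℕ => (0:ℝ)) _ _)⟩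
    | add x y _ _ hx hy =>
      obtain ⟨c1, h1⟩ := hx; obtain ⟨c2, h2⟩ := hy
      exact ⟨c1 + c2, by simpa [inner_add_right] using h1.add h2⟩
    | smul r x _ hx =>
      obtain ⟨c, h⟩ := hx
      exact ⟨r * c, by simpa [real_inner_smul_right] using h.const_mul r⟩
  have hclos : ∀ z ∈ M, ∃ c, Tendsto (fun j => ⟪v (φ j), z⟫) atTop (𝓝 c) := by
    intro z hz
    have hcs : CauchySeq (fun j => ⟪v (φ j), z⟫) := by
      rw [Metric.cauchySeq_iff]
      intro ε hε
      have hzc : z ∈ closure ((Submodule.span ℝ (Set.range v) : Submodule ℝ H) : Set H) := by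
        rw [← Submodule.topologicalClosure_coe]; exact hz
      rw [Metric.mem_closure_iff] at hzc
      obtain ⟨z', hz'mem, hd⟩ := hzc (ε / (3 * (C + 1))) (by positivity)
      rw [dist_eq_norm] at hd
      obtain ⟨c, hcz'⟩ := hspan z' hz'mem
      have hcs' := hcz'.cauchySeq
      rw [Metric.cauchySeq_iff] at hcs'
      obtain ⟨N, hN⟩ := hcs' (ε/3) (by positivity)
      refine ⟨N, fun m hm n hn => ?_⟩
      have key : ∀ j, |⟪v (φ j), z⟫ - ⟪v (φ j), z'⟫| ≤ ε/3 := by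
        intro j
        rw [← inner_sub_right]
        calc |⟪v (φ j), z - z'⟫| ≤ ‖v (φ j)‖ * ‖z - z'‖ := abs_real_inner_le_norm _ _
          _ ≤ C * (ε / (3 * (C + 1))) := by
            apply mul_le_mul (hC _) hd.le (norm_nonneg _) hC0
          _ ≤ ε/3 := by
            have h3 : (0:ℝ) < 3 * (C + 1) := by positivity
            rw [mul_div_assoc', div_le_div_iff₀ h3 (by norm_num : (0:ℝ) < 3)]
            nlinarith [hε.le]
      have h1 := key m
      have h2 := key n
      have h3 := hN m hm n hn
      rw [Real.dist_eq] at h3 ⊢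
      have := abs_sub_abs_le_abs_sub (⟪v (φ m), z⟫ - ⟪v (φ n), z⟫) 0
      calc |⟪v (φ m), z⟫ - ⟪v (φ n), z⟫|
          = |(⟪v (φ m), z⟫ - ⟪v (φ m), z'⟫) + (⟪v (φ m), z'⟫ - ⟪v (φ n), z'⟫)
              + (⟪v (φ n), z'⟫ - ⟪v (φ n), z⟫)| := by ring_nf
        _ ≤ |⟪v (φ m), z⟫ - ⟪v (φ m), z'⟫| + |⟪v (φ m), z'⟫ - ⟪v (φ n), z'⟫|
              + |⟪v (φ n), z'⟫ - ⟪v (φ n), z⟫| := abs_add_three _ _ _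
        _ < ε := by
            have h2' : |⟪v (φ n), z'⟫ - ⟪v (φ n), z⟫| ≤ ε/3 := by
              rw [abs_sub_comm]; exact h2
            linarith
    exact cauchySeq_tendsto_of_complete hcs
  have hall : ∀ z : H, ∃ c, Tendsto (fun j => ⟪v (φ j), z⟫) atTop (𝓝 c) := by
    intro z
    have hdec : ∀ n, ⟪v n, z⟫ = ⟪v n, orthProj M z⟫ := by
      intro n
      have h1 : z - orthProj M z ∈ Mᗮ := sub_orthProj_mem M z
      have h2 : ⟪v n, z - orthProj M z⟫ = 0 := (Submodule.mem_orthogonal M _).1 h1 _ (hvM n)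
      rw [inner_sub_right] at h2
      linarith
    obtain ⟨c, hc⟩ := hclos (orthProj M z) (orthProj_mem M z)
    refine ⟨c, ?_⟩
    have : (fun j => ⟪v (φ j), z⟫) = fun j => ⟪v (φ j), orthProj M z⟫ := funext fun j => hdec _
    rw [this]; exact hc
  choose c hc using hall
  have hadd : ∀ z1 z2, c (z1 + z2) = c z1 + c z2 := fun z1 z2 =>
    tendsto_nhds_unique (hc (z1 + z2)) (by simpa [inner_add_right] using (hc z1).add (hc z2))
  have hsmul : ∀ (r : ℝ) (z : H), c (r • z) = r * c z := fun r z =>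
    tendsto_nhds_unique (hc (r • z)) (by simpa [real_inner_smul_right] using (hc z).const_mul r)
  have hbound : ∀ z, |c z| ≤ C * ‖z‖ := by
    intro z
    refine le_of_tendsto (hc z).abs (Eventually.of_forall fun j => ?_)
    exact le_trans (abs_real_inner_le_norm _ _) (mul_le_mul_of_nonneg_right (hC _) (norm_nonneg _))
  let L : H →L[ℝ] ℝ := LinearMap.mkContinuous
    { toFun := c
      map_add' := hadd
      map_smul' := fun r z => by simpa using hsmul r z } C
    (fun z => by simpa [Real.norm_eq_abs] using hbound z)
  refine ⟨φ, (InnerProductSpace.toDual ℝ H).symm L, hφ, fun q => ?_⟩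
  have hLq : ⟪(InnerProductSpace.toDual ℝ H).symm L, q⟫ = L q :=
    InnerProductSpace.toDual_symm_apply
  rw [hLq]
  exact hc q

end WeakCompact

section Structural
open scoped RealInnerProductSpace
open Filter Topology Metric Submodule

variable {X Y : Type*} [NormedAddCommGroup X] [InnerProductSpace ℝ X] [CompleteSpace X]
  [NormedAddCommGroup Y] [InnerProductSpace ℝ Y] [CompleteSpace Y]

variable (T : X →L[ℝ] Y) (A : Submodule ℝ X) [FiniteDimensional ℝ A]

/-- Elements of `(ker (T ∘ P_A))ᗮ` lie in `A`. -/
theorem kerPerp_subset_A {z : X} (hz : z ∈ (LinearMap.ker (T.comp (orthProj A) : X →ₗ[ℝ] Y))ᗮ) : z ∈ A := by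
  have h1 : z - orthProj A z ∈ LinearMap.ker (T.comp (orthProj A) : X →ₗ[ℝ] Y) := by
    rw [LinearMap.mem_ker, ContinuousLinearMap.coe_coe, ContinuousLinearMap.comp_apply,
      orthProj_eq_zero (sub_orthProj_mem A z), map_zero]
  have h2 : ⟪z - orthProj A z, z⟫ = 0 := (Submodule.mem_orthogonal _ z).1 hz _ h1
  have h3 : ⟪z - orthProj A z, orthProj A z⟫ = 0 :=
    (Submodule.mem_orthogonal' _ _).1 (sub_orthProj_mem A z) _ (orthProj_mem A z)
  have h4 : ⟪z - orthProj A z, z - orthProj A z⟫ = (0:ℝ) := by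
    rw [inner_sub_right]; linarith
  have h5 : z - orthProj A z = 0 := inner_self_eq_zero.1 h4
  rw [sub_eq_zero] at h5
  rw [h5]
  exact orthProj_mem A z

theorem mem_ker_comp_of {x : X} (hx : x ∈ LinearMap.ker (T : X →ₗ[ℝ] Y) ⊓ A) :
    x ∈ LinearMap.ker (T.comp (orthProj A) : X →ₗ[ℝ] Y) := by
  obtain ⟨hx1, hx2⟩ := Submodule.mem_inf.1 hx
  rw [LinearMap.mem_ker, ContinuousLinearMap.coe_coe, ContinuousLinearMap.comp_apply, orthProj_eq_self hx2]
  exact hx1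

theorem v_memA (x : X) :
    orthProj A x - orthProj (LinearMap.ker (T : X →ₗ[ℝ] Y) ⊓ A) (orthProj A x) ∈ A :=
  Submodule.sub_mem A (orthProj_mem A x)
    ((inf_le_right : LinearMap.ker (T : X →ₗ[ℝ] Y) ⊓ A ≤ A) (orthProj_mem _ _))

theorem v_spec (x : X) :
    orthProj A x - orthProj (LinearMap.ker (T : X →ₗ[ℝ] Y) ⊓ A) (orthProj A x)
      ∈ (LinearMap.ker (T.comp (orthProj A) : X →ₗ[ℝ] Y))ᗮ := by
  set K : Submodule ℝ X := LinearMap.ker (T : X →ₗ[ℝ] Y) ⊓ A with hK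
  set vv : X := orthProj A x - orthProj K (orthProj A x) with hvvdef
  have hvA : vv ∈ A := v_memA T A x
  have hvK : vv ∈ Kᗮ := sub_orthProj_mem K (orthProj A x)
  rw [Submodule.mem_orthogonal]
  intro w hw
  have hw1 : orthProj A w ∈ K := by
    refine Submodule.mem_inf.2 ⟨?_, orthProj_mem A w⟩
    rw [LinearMap.mem_ker, ContinuousLinearMap.coe_coe] at hw ⊢
    rw [ContinuousLinearMap.comp_apply] at hw
    exact hw
  have h1 : ⟪orthProj A w, vv⟫ = 0 := (Submodule.mem_orthogonal K vv).1 hvK _ hw1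
  have h2 : ⟪w - orthProj A w, vv⟫ = 0 :=
    (Submodule.mem_orthogonal' _ _).1 (sub_orthProj_mem A w) _ hvA
  have hsum : orthProj A w + (w - orthProj A w) = w := by abel
  calc ⟪w, vv⟫ = ⟪orthProj A w + (w - orthProj A w), vv⟫ := by rw [hsum]
    _ = ⟪orthProj A w, vv⟫ + ⟪w - orthProj A w, vv⟫ := inner_add_left _ _ _
    _ = 0 := by rw [h1, h2]; ring

theorem v_ker {x : X} (hx : x ∈ LinearMap.ker (T : X →ₗ[ℝ] Y)) :
    x - (orthProj A x - orthProj (LinearMap.ker (T : X →ₗ[ℝ] Y) ⊓ A) (orthProj A x))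
      ∈ LinearMap.ker (T.comp (orthProj A) : X →ₗ[ℝ] Y) := by
  set K : Submodule ℝ X := LinearMap.ker (T : X →ₗ[ℝ] Y) ⊓ A with hK
  rw [LinearMap.mem_ker, ContinuousLinearMap.coe_coe, ContinuousLinearMap.comp_apply]
  have heq : orthProj A (x - (orthProj A x - orthProj K (orthProj A x)))
      = orthProj K (orthProj A x) := by
    rw [map_sub, map_sub, orthProj_eq_self (orthProj_mem A x),
      orthProj_eq_self ((inf_le_right : K ≤ A) (orthProj_mem K _))]
    abel
  rw [heq]
  have hm : orthProj K (orthProj A x) ∈ LinearMap.ker (T : X →ₗ[ℝ] Y) :=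
    (inf_le_left : K ≤ LinearMap.ker (T : X →ₗ[ℝ] Y)) (orthProj_mem K _)
  exact hm

theorem v_image (x : X) :
    T (orthProj A x - orthProj (LinearMap.ker (T : X →ₗ[ℝ] Y) ⊓ A) (orthProj A x)) = T (orthProj A x) := by
  rw [map_sub]
  have hm : orthProj (LinearMap.ker (T : X →ₗ[ℝ] Y) ⊓ A) (orthProj A x) ∈ LinearMap.ker (T : X →ₗ[ℝ] Y) :=
    (inf_le_left : LinearMap.ker (T : X →ₗ[ℝ] Y) ⊓ A ≤ LinearMap.ker (T : X →ₗ[ℝ] Y)) (orthProj_mem _ _)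
  rw [LinearMap.mem_ker, ContinuousLinearMap.coe_coe] at hm
  rw [hm, sub_zero]

end Structural

open scoped RealInnerProductSpace in
set_option maxHeartbeats 2000000 in
/-- Kernel approximability is equivalent to inverse-graph approximability:
`s-lim G(Tₙ†) = w-lim̃ G(Tₙ†) = G(T†)` in `Y × X`. -/
theorem stmt0
    (T : X →L[ℝ] Y) (Xn : ℕ → Submodule ℝ X)
    (hfin : ∀ n, FiniteDimensional ℝ (Xn n))
    (hinf : ¬ FiniteDimensional ℝ X)
    (hproj : ∀ x : X, Tendsto (fun n => orthProj (Xn n) x) atTop (𝓝 x))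
    (Tn : ℕ → X →L[ℝ] Y) (hTn : ∀ n, Tn n = T.comp (orthProj (Xn n))) :
    (∀ x : X, x ∈ LinearMap.ker (T : X →ₗ[ℝ] Y) ↔
      Tendsto (fun n => Metric.infDist x ((LinearMap.ker (T : X →ₗ[ℝ] Y) ⊓ Xn n : Submodule ℝ X) : Set X))
        atTop (𝓝 0))
    ↔
    (({p : Y × X | ∃ u : ℕ → Y × X,
        (∀ n, (u n).2 ∈ (LinearMap.ker (Tn n : X →ₗ[ℝ] Y))ᗮ ∧
          (Tn n) (u n).2 = orthProj ((Xn n).map (T : X →ₗ[ℝ] Y)) (u n).1) ∧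
        Tendsto u atTop (𝓝 p)}
      = {p : Y × X | p.2 ∈ (LinearMap.ker (T : X →ₗ[ℝ] Y))ᗮ ∧
          T p.2 = orthProj (LinearMap.range (T : X →ₗ[ℝ] Y)).topologicalClosure p.1}) ∧
     ({p : Y × X | ∃ u : ℕ → Y × X,
        (∀ n, ∃ k, n ≤ k ∧ (u n).2 ∈ (LinearMap.ker (Tn k : X →ₗ[ℝ] Y))ᗮ ∧
          (Tn k) (u n).2 = orthProj ((Xn k).map (T : X →ₗ[ℝ] Y)) (u n).1) ∧
        ∀ q : Y × X, Tendsto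
          (fun n => (inner ℝ (u n).1 q.1 : ℝ) + (inner ℝ (u n).2 q.2 : ℝ)) atTop
          (𝓝 ((inner ℝ p.1 q.1 : ℝ) + (inner ℝ p.2 q.2 : ℝ)))}
      = {p : Y × X | p.2 ∈ (LinearMap.ker (T : X →ₗ[ℝ] Y))ᗮ ∧
          T p.2 = orthProj (LinearMap.range (T : X →ₗ[ℝ] Y)).topologicalClosure p.1})) := by
  haveI := hfin
  haveI hOPm : ∀ n, HasOrthogonalProjection ((Xn n).map (T : X →ₗ[ℝ] Y)) := fun n => by
    haveI : FiniteDimensional ℝ ((Xn n).map (T : X →ₗ[ℝ] Y)) := Module.Finite.map _ _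
    infer_instance
  haveI : CompleteSpace ((LinearMap.range (T : X →ₗ[ℝ] Y)).topologicalClosure) :=
    (Submodule.isClosed_topologicalClosure _).completeSpace_coe
  set Q : Submodule ℝ Y := (LinearMap.range (T : X →ₗ[ℝ] Y)).topologicalClosure with hQdef
  -- abbreviation for the candidate sequence
  set vv : X → ℕ → X := fun x n =>
    orthProj (Xn n) x - orthProj (LinearMap.ker (T : X →ₗ[ℝ] Y) ⊓ Xn n) (orthProj (Xn n) x) with hvvdef
  -- map T (Xn n) ≤ Q
  have hmapQ : ∀ n, (Xn n).map (T : X →ₗ[ℝ] Y) ≤ Q := by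
    intro n y hy
    obtain ⟨x, -, rfl⟩ := hy
    exact (Submodule.le_topologicalClosure _) (LinearMap.mem_range_self _ x)
  -- G ⊆ A (strong graph limit), unconditional
  have hGA : ∀ p : Y × X,
      (p.2 ∈ (LinearMap.ker (T : X →ₗ[ℝ] Y))ᗮ ∧ T p.2 = orthProj Q p.1) →
      ∃ u : ℕ → Y × X,
        (∀ n, (u n).2 ∈ (LinearMap.ker (Tn n : X →ₗ[ℝ] Y))ᗮ ∧
          (Tn n) (u n).2 = orthProj ((Xn n).map (T : X →ₗ[ℝ] Y)) (u n).1) ∧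
        Tendsto u atTop (𝓝 p) := by
    rintro p ⟨hp2, hpeq⟩
    refine ⟨fun n => (T (vv p.2 n) + (p.1 - orthProj Q p.1), vv p.2 n), fun n => ⟨?_, ?_⟩, ?_⟩
    · rw [hTn n]; exact v_spec T (Xn n) p.2
    · have hvXn : vv p.2 n ∈ Xn n := v_memA T (Xn n) p.2
      have hTnv : Tn n (vv p.2 n) = T (vv p.2 n) := by
        rw [hTn n, ContinuousLinearMap.comp_apply, orthProj_eq_self hvXn]
      rw [hTnv, map_add]
      rw [orthProj_eq_self (x := T (vv p.2 n)) (Submodule.mem_map_of_mem hvXn),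
        orthProj_eq_zero (Submodule.orthogonal_le (hmapQ n) (sub_orthProj_mem Q p.1))]
      simp
    · -- convergence
      have hvt : Tendsto (fun n => vv p.2 n) atTop (𝓝 p.2) := by
        have h1 : ∀ n, orthProj (LinearMap.ker (T : X →ₗ[ℝ] Y) ⊓ Xn n) (orthProj (Xn n) p.2)
            = orthProj (LinearMap.ker (T : X →ₗ[ℝ] Y) ⊓ Xn n) (orthProj (Xn n) p.2 - p.2) := by
          intro n
          have hzero : orthProj (LinearMap.ker (T : X →ₗ[ℝ] Y) ⊓ Xn n) p.2 = 0 :=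
            orthProj_eq_zero (Submodule.orthogonal_le inf_le_left hp2)
          rw [map_sub, hzero, sub_zero]
        have h2 : Tendsto (fun n => orthProj (LinearMap.ker (T : X →ₗ[ℝ] Y) ⊓ Xn n) (orthProj (Xn n) p.2))
            atTop (𝓝 0) := by
          have hb : Tendsto (fun n => ‖orthProj (Xn n) p.2 - p.2‖) atTop (𝓝 0) := by
            simpa using (tendsto_sub_nhds_zero_iff.mpr (hproj p.2)).norm
          apply squeeze_zero_norm (fun n => ?_) hb
          rw [h1 n]
          exact norm_orthProj_le _ _
        have := (hproj p.2).sub h2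
        simpa [hvvdef] using this
      have hft : Tendsto (fun n => T (vv p.2 n) + (p.1 - orthProj Q p.1)) atTop (𝓝 p.1) := by
        have h1 : Tendsto (fun n => T (vv p.2 n)) atTop (𝓝 (T p.2)) :=
          (T.continuous.tendsto _).comp hvt
        have h2 := h1.add (tendsto_const_nhds (x := p.1 - orthProj Q p.1))
        have h3 : T p.2 + (p.1 - orthProj Q p.1) = p.1 := by rw [hpeq]; abel
        rwa [h3] at h2
      have := hft.prodMk_nhds hvt
      simpa using this
  -- A ⊆ B, unconditional
  have hAB : ∀ p : Y × X,
      (∃ u : ℕ → Y × X,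
        (∀ n, (u n).2 ∈ (LinearMap.ker (Tn n : X →ₗ[ℝ] Y))ᗮ ∧
          (Tn n) (u n).2 = orthProj ((Xn n).map (T : X →ₗ[ℝ] Y)) (u n).1) ∧
        Tendsto u atTop (𝓝 p)) →
      (∃ u : ℕ → Y × X,
        (∀ n, ∃ k, n ≤ k ∧ (u n).2 ∈ (LinearMap.ker (Tn k : X →ₗ[ℝ] Y))ᗮ ∧
          (Tn k) (u n).2 = orthProj ((Xn k).map (T : X →ₗ[ℝ] Y)) (u n).1) ∧
        ∀ q : Y × X, Tendsto
          (fun n => (inner ℝ (u n).1 q.1 : ℝ) + (inner ℝ (u n).2 q.2 : ℝ)) atTop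
          (𝓝 ((inner ℝ p.1 q.1 : ℝ) + (inner ℝ p.2 q.2 : ℝ)))) := by
    rintro p ⟨u, hu, hconv⟩
    refine ⟨u, fun n => ⟨n, le_refl n, (hu n).1, (hu n).2⟩, fun q => ?_⟩
    have h1 : Tendsto (fun n => (u n).1) atTop (𝓝 p.1) :=
      (continuous_fst.tendsto p).comp hconv
    have h2 : Tendsto (fun n => (u n).2) atTop (𝓝 p.2) :=
      (continuous_snd.tendsto p).comp hconv
    exact (h1.inner tendsto_const_nhds).add (h2.inner tendsto_const_nhds)
  -- B ⊆ G assuming kernel approximability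
  have hBG : (∀ x : X, x ∈ LinearMap.ker (T : X →ₗ[ℝ] Y) ↔
      Tendsto (fun n => Metric.infDist x ((LinearMap.ker (T : X →ₗ[ℝ] Y) ⊓ Xn n : Submodule ℝ X) : Set X))
        atTop (𝓝 0)) →
      ∀ p : Y × X,
      (∃ u : ℕ → Y × X,
        (∀ n, ∃ k, n ≤ k ∧ (u n).2 ∈ (LinearMap.ker (Tn k : X →ₗ[ℝ] Y))ᗮ ∧
          (Tn k) (u n).2 = orthProj ((Xn k).map (T : X →ₗ[ℝ] Y)) (u n).1) ∧
        ∀ q : Y × X, Tendsto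
          (fun n => (inner ℝ (u n).1 q.1 : ℝ) + (inner ℝ (u n).2 q.2 : ℝ)) atTop
          (𝓝 ((inner ℝ p.1 q.1 : ℝ) + (inner ℝ p.2 q.2 : ℝ)))) →
      (p.2 ∈ (LinearMap.ker (T : X →ₗ[ℝ] Y))ᗮ ∧ T p.2 = orthProj Q p.1) := by
    rintro ka p ⟨u, hu, hw⟩
    choose k hk hu2mem hu2eq using hu
    have hkTop : Tendsto k atTop atTop := tendsto_atTop_mono hk tendsto_id
    have hw1 : ∀ q1 : Y, Tendsto (fun n => ⟪(u n).1, q1⟫) atTop (𝓝 ⟪p.1, q1⟫) := by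
      intro q1; have := hw (q1, 0); simpa using this
    have hw2 : ∀ q2 : X, Tendsto (fun n => ⟪(u n).2, q2⟫) atTop (𝓝 ⟪p.2, q2⟫) := by
      intro q2; have := hw (0, q2); simpa using this
    obtain ⟨C1, hC10, hC1⟩ := exists_bound_of_weak hw1
    obtain ⟨C2, hC20, hC2⟩ := exists_bound_of_weak hw2
    have ha : p.2 ∈ (LinearMap.ker (T : X →ₗ[ℝ] Y))ᗮ := by
      rw [Submodule.mem_orthogonal]
      intro z hz
      have hdist := (ka z).1 hz
      have hex : ∀ m : ℕ, ∃ zm ∈ ((LinearMap.ker (T : X →ₗ[ℝ] Y) ⊓ Xn m : Submodule ℝ X) : Set X),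
          dist z zm < Metric.infDist z ((LinearMap.ker (T : X →ₗ[ℝ] Y) ⊓ Xn m : Submodule ℝ X) : Set X)
            + 1/(m+1) := by
        intro m
        have hne : ((LinearMap.ker (T : X →ₗ[ℝ] Y) ⊓ Xn m : Submodule ℝ X) : Set X).Nonempty :=
          ⟨0, Submodule.zero_mem _⟩
        refine (Metric.infDist_lt_iff hne).1 ?_
        have : (0:ℝ) < 1/(m+1) := by positivity
        linarith
      choose zs hzs hzd using hex
      have hztend : Tendsto zs atTop (𝓝 z) := by
        rw [tendsto_iff_dist_tendsto_zero]
        have hbd := hdist.add tendsto_one_div_add_atTop_nhds_zero_nat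
        rw [add_zero] at hbd
        apply squeeze_zero (fun m => dist_nonneg) (fun m => ?_) hbd
        rw [dist_comm]
        exact (hzd m).le
      have hz0 : ∀ n, ⟪(u n).2, zs (k n)⟫ = 0 := by
        intro n
        have hzk : zs (k n) ∈ LinearMap.ker (Tn (k n) : X →ₗ[ℝ] Y) := by
          rw [hTn (k n)]
          exact mem_ker_comp_of T (Xn (k n)) (hzs (k n))
        exact (Submodule.mem_orthogonal' _ _).1 (hu2mem n) _ hzk
      have hlim : Tendsto (fun n => ⟪(u n).2, zs (k n)⟫) atTop (𝓝 ⟪p.2, z⟫) :=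
        tendsto_inner_weak_strong hC2 hw2 (hztend.comp hkTop)
      have h0 : ⟪p.2, z⟫ = 0 :=
        tendsto_nhds_unique (hlim.congr hz0) tendsto_const_nhds
      rw [real_inner_comm]
      exact h0
    refine ⟨ha, ?_⟩
    have hTw : ∀ v : X, ⟪p.1, T v⟫ = ⟪T p.2, T v⟫ := by
      intro v
      have hseq : ∀ n, ⟪(u n).1, T (orthProj (Xn (k n)) v)⟫
          = ⟪(u n).2, (ContinuousLinearMap.adjoint T) (T (orthProj (Xn (k n)) v))⟫ := by
        intro n
        have hperp : (u n).1 - Tn (k n) (u n).2 ∈ ((Xn (k n)).map (T : X →ₗ[ℝ] Y))ᗮ := by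
          rw [hu2eq n]; exact sub_orthProj_mem _ _
        have hmemmap : T (orthProj (Xn (k n)) v) ∈ (Xn (k n)).map (T : X →ₗ[ℝ] Y) :=
          Submodule.mem_map_of_mem (orthProj_mem _ _)
        have h0 : ⟪(u n).1 - Tn (k n) (u n).2, T (orthProj (Xn (k n)) v)⟫ = 0 :=
          (Submodule.mem_orthogonal' _ _).1 hperp _ hmemmap
        rw [inner_sub_left] at h0
        have hA : (u n).2 ∈ Xn (k n) := by
          have hmem := hu2mem n
          rw [hTn (k n)] at hmem
          exact kerPerp_subset_A T (Xn (k n)) hmem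
        have hTn2 : Tn (k n) (u n).2 = T ((u n).2) := by
          rw [hTn (k n), ContinuousLinearMap.comp_apply, orthProj_eq_self hA]
        rw [hTn2] at h0
        rw [ContinuousLinearMap.adjoint_inner_right]
        linarith
      have hzt : Tendsto (fun n => T (orthProj (Xn (k n)) v)) atTop (𝓝 (T v)) :=
        (T.continuous.tendsto v).comp ((hproj v).comp hkTop)
      have hlhs : Tendsto (fun n => ⟪(u n).1, T (orthProj (Xn (k n)) v)⟫) atTop
          (𝓝 ⟪p.1, T v⟫) := tendsto_inner_weak_strong hC1 hw1 hzt
      have hrhs0 : Tendsto (fun n => (ContinuousLinearMap.adjoint T) (T (orthProj (Xn (k n)) v)))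
          atTop (𝓝 ((ContinuousLinearMap.adjoint T) (T v))) :=
        ((ContinuousLinearMap.adjoint T).continuous.tendsto _).comp hzt
      have hrhs : Tendsto (fun n => ⟪(u n).2,
          (ContinuousLinearMap.adjoint T) (T (orthProj (Xn (k n)) v))⟫) atTop
          (𝓝 ⟪p.2, (ContinuousLinearMap.adjoint T) (T v)⟫) :=
        tendsto_inner_weak_strong hC2 hw2 hrhs0
      have heq := tendsto_nhds_unique (hlhs.congr hseq) hrhs
      rw [ContinuousLinearMap.adjoint_inner_right] at heq
      exact heq
    refine (orthProj_eq_of (Submodule.le_topologicalClosure _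
      (LinearMap.mem_range_self _ p.2)) ?_).symm
    rw [Submodule.mem_orthogonal]
    intro w hw'
    have hsub : (LinearMap.range (T : X →ₗ[ℝ] Y) : Set Y) ⊆ {y : Y | ⟪y, p.1 - T p.2⟫ = 0} := by
      rintro y ⟨v, rfl⟩
      simp only [Set.mem_setOf_eq, inner_sub_right, ContinuousLinearMap.coe_coe]
      have h1 := hTw v
      rw [real_inner_comm (T v) p.1, real_inner_comm (T v) (T p.2)] at *
      linarith [hTw v]
    have hclosed : IsClosed {y : Y | ⟪y, p.1 - T p.2⟫ = 0} :=
      isClosed_eq (Continuous.inner continuous_id continuous_const) continuous_const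
    have hwc : w ∈ closure (LinearMap.range (T : X →ₗ[ℝ] Y) : Set Y) := by
      rw [← Submodule.topologicalClosure_coe]
      exact hw'
    exact closure_minimal hsub hclosed hwc
  -- kernel approximability from B ⊆ G
  have hKA : (∀ p : Y × X,
      (∃ u : ℕ → Y × X,
        (∀ n, ∃ k, n ≤ k ∧ (u n).2 ∈ (LinearMap.ker (Tn k : X →ₗ[ℝ] Y))ᗮ ∧
          (Tn k) (u n).2 = orthProj ((Xn k).map (T : X →ₗ[ℝ] Y)) (u n).1) ∧
        ∀ q : Y × X, Tendsto
          (fun n => (inner ℝ (u n).1 q.1 : ℝ) + (inner ℝ (u n).2 q.2 : ℝ)) atTop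
          (𝓝 ((inner ℝ p.1 q.1 : ℝ) + (inner ℝ p.2 q.2 : ℝ)))) →
      (p.2 ∈ (LinearMap.ker (T : X →ₗ[ℝ] Y))ᗮ ∧ T p.2 = orthProj Q p.1)) →
      ∀ x : X, x ∈ LinearMap.ker (T : X →ₗ[ℝ] Y) →
      Tendsto (fun n => Metric.infDist x ((LinearMap.ker (T : X →ₗ[ℝ] Y) ⊓ Xn n : Submodule ℝ X) : Set X))
        atTop (𝓝 0) := by
    intro hB x hx
    have hvperp : ∀ n, vv x n ∈ (LinearMap.ker (Tn n : X →ₗ[ℝ] Y))ᗮ := fun n => by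
      rw [hTn n]; exact v_spec T (Xn n) x
    have hvker : ∀ n, x - vv x n ∈ LinearMap.ker (Tn n : X →ₗ[ℝ] Y) := fun n => by
      rw [hTn n]; exact v_ker T (Xn n) hx
    have hinner : ∀ n, ⟪vv x n, x⟫ = ‖vv x n‖^2 := by
      intro n
      have h0 : ⟪vv x n, x - vv x n⟫ = 0 :=
        (Submodule.mem_orthogonal' _ _).1 (hvperp n) _ (hvker n)
      rw [inner_sub_right] at h0
      rw [← real_inner_self_eq_norm_sq]
      linarith
    have hbdd : ∀ n, ‖vv x n‖ ≤ ‖x‖ := by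
      intro n
      by_contra hcon
      push_neg at hcon
      have h1 := hinner n
      have h2 : ⟪vv x n, x⟫ ≤ ‖vv x n‖ * ‖x‖ := real_inner_le_norm _ _
      nlinarith [norm_nonneg (vv x n), norm_nonneg x]
    have hTv : Tendsto (fun n => T (vv x n)) atTop (𝓝 0) := by
      have heq : ∀ n, T (vv x n) = T (orthProj (Xn n) x) := fun n => v_image T (Xn n) x
      have h1 : Tendsto (fun n => T (orthProj (Xn n) x)) atTop (𝓝 (T x)) :=
        (T.continuous.tendsto x).comp (hproj x)
      rw [LinearMap.mem_ker, ContinuousLinearMap.coe_coe] at hx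
      rw [hx] at h1
      exact h1.congr fun n => (heq n).symm
    have hvnorm : Tendsto (fun n => ‖vv x n‖) atTop (𝓝 0) := by
      apply tendsto_of_subseq_tendsto
      intro ns hns
      obtain ⟨ms1, w, hms1, hwk⟩ := exists_weak_subseq (fun j => vv x (ns j)) ‖x‖
        (fun j => hbdd _)
      have hev : ∀ j : ℕ, ∀ᶠ m in atTop, j ≤ ns (ms1 m) := fun j =>
        (hns.comp hms1.tendsto_atTop).eventually_ge_atTop j
      obtain ⟨ms2, hms2, hms2p⟩ := Filter.extraction_forall_of_eventually hev
      set m : ℕ → ℕ := fun j => ns (ms1 (ms2 j)) with hm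
      have hmTop : Tendsto m atTop atTop := tendsto_atTop_mono hms2p tendsto_id
      have hwk2 : ∀ q : X, Tendsto (fun j => ⟪vv x (m j), q⟫) atTop (𝓝 ⟪w, q⟫) := by
        intro q
        exact (hwk q).comp hms2.tendsto_atTop
      have hmemB : ((0 : Y), w).2 ∈ (LinearMap.ker (T : X →ₗ[ℝ] Y))ᗮ ∧
          T ((0 : Y), w).2 = orthProj Q ((0 : Y), w).1 := by
        apply hB ((0 : Y), w)
        refine ⟨fun j => (T (vv x (m j)), vv x (m j)), fun j => ⟨m j, hms2p j, ?_, ?_⟩, ?_⟩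
        · exact hvperp (m j)
        · have hvXn : vv x (m j) ∈ Xn (m j) := v_memA T (Xn (m j)) x
          have hTnv : Tn (m j) (vv x (m j)) = T (vv x (m j)) := by
            rw [hTn (m j), ContinuousLinearMap.comp_apply, orthProj_eq_self hvXn]
          rw [hTnv, orthProj_eq_self (x := T (vv x (m j))) (Submodule.mem_map_of_mem hvXn)]
        · intro q
          have h1 : Tendsto (fun j => ⟪T (vv x (m j)), q.1⟫) atTop (𝓝 ⟪(0:Y), q.1⟫) :=
            (hTv.comp hmTop).inner tendsto_const_nhds
          exact h1.add (hwk2 q.2)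
      have hwperp : w ∈ (LinearMap.ker (T : X →ₗ[ℝ] Y))ᗮ := hmemB.1
      have hwx : ⟪w, x⟫ = 0 := by
        rw [real_inner_comm]
        exact (Submodule.mem_orthogonal _ _).1 hwperp _ hx
      have hsq : Tendsto (fun j => ‖vv x (m j)‖^2) atTop (𝓝 0) := by
        have := (hwk2 x).congr fun j => hinner (m j)
        rwa [hwx] at this
      refine ⟨ms1 ∘ ms2, ?_⟩
      have hs := (Real.continuous_sqrt.tendsto 0).comp hsq
      simp only [Function.comp_def] at hs ⊢
      convert hs using 2 with j
      · rw [Real.sqrt_sq (norm_nonneg _)]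
      · rw [Real.sqrt_zero]
    -- squeeze
    have hub : ∀ n, Metric.infDist x ((LinearMap.ker (T : X →ₗ[ℝ] Y) ⊓ Xn n : Submodule ℝ X) : Set X)
        ≤ ‖x - orthProj (Xn n) x‖ + ‖vv x n‖ := by
      intro n
      have hKmem : orthProj (LinearMap.ker (T : X →ₗ[ℝ] Y) ⊓ Xn n) (orthProj (Xn n) x)
          ∈ ((LinearMap.ker (T : X →ₗ[ℝ] Y) ⊓ Xn n : Submodule ℝ X) : Set X) := orthProj_mem _ _
      have h1 := Metric.infDist_le_dist_of_mem (x := x) hKmem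
      rw [dist_eq_norm] at h1
      have h2 : x - orthProj (LinearMap.ker (T : X →ₗ[ℝ] Y) ⊓ Xn n) (orthProj (Xn n) x)
          = (x - orthProj (Xn n) x) + vv x n := by
        rw [hvvdef]; beta_reduce; abel
      rw [h2] at h1
      exact h1.trans (norm_add_le _ _)
    have hlimb : Tendsto (fun n => ‖x - orthProj (Xn n) x‖ + ‖vv x n‖) atTop (𝓝 0) := by
      have h3 : Tendsto (fun n => ‖x - orthProj (Xn n) x‖) atTop (𝓝 0) := by
        have := (tendsto_sub_nhds_zero_iff.mpr (hproj x)).norm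
        simpa [norm_sub_rev] using this
      simpa using h3.add hvnorm
    exact squeeze_zero (fun n => Metric.infDist_nonneg) hub hlimb
  -- unconditional converse of kernel approximability
  have hback : ∀ x : X,
      Tendsto (fun n => Metric.infDist x ((LinearMap.ker (T : X →ₗ[ℝ] Y) ⊓ Xn n : Submodule ℝ X) : Set X))
        atTop (𝓝 0) → x ∈ LinearMap.ker (T : X →ₗ[ℝ] Y) := by
    intro x hdist
    have hle : ∀ n, Metric.infDist x ((LinearMap.ker (T : X →ₗ[ℝ] Y) : Submodule ℝ X) : Set X)
        ≤ Metric.infDist x ((LinearMap.ker (T : X →ₗ[ℝ] Y) ⊓ Xn n : Submodule ℝ X) : Set X) := by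
      intro n
      apply Metric.infDist_le_infDist_of_subset
      · intro y hy
        exact (Submodule.mem_inf.1 hy).1
      · exact ⟨0, Submodule.zero_mem _⟩
    have h0 : Metric.infDist x ((LinearMap.ker (T : X →ₗ[ℝ] Y) : Submodule ℝ X) : Set X) = 0 := by
      refine le_antisymm ?_ Metric.infDist_nonneg
      exact ge_of_tendsto hdist (Eventually.of_forall hle)
    have hc : x ∈ closure ((LinearMap.ker (T : X →ₗ[ℝ] Y) : Submodule ℝ X) : Set X) :=
      (Metric.mem_closure_iff_infDist_zero ⟨0, Submodule.zero_mem _⟩).2 h0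
    rwa [(ContinuousLinearMap.isClosed_ker T).closure_eq] at hc
  -- assemble
  constructor
  · intro ka
    have hB := hBG ka
    constructor
    · apply Set.eq_of_subset_of_subset
      · intro p hp
        exact hB p (hAB p hp)
      · intro p hp
        exact hGA p hp
    · apply Set.eq_of_subset_of_subset
      · intro p hp
        exact hB p hp
      · intro p hp
        exact hAB p (hGA p hp)
  · rintro ⟨hAeq, hBeq⟩ x
    constructor
    · intro hx
      refine hKA (fun p hp => ?_) x hx
      have : p ∈ {p : Y × X | p.2 ∈ (LinearMap.ker (T : X →ₗ[ℝ] Y))ᗮ ∧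
          T p.2 = orthProj (LinearMap.range (T : X →ₗ[ℝ] Y)).topologicalClosure p.1} := hBeq ▸ hp
      exact this
    · exact hback x
end

section
/- Let X and Y be Hilbert spaces, T : X → Y a bounded linear operator with a least-squares projection approximation {(X_n, T_n)}. Then the orthogonal projections onto the ranges R(T_n) = T(X_n) converge strongly to the orthogonal projection onto the closure of R(T): s-lim_{n→∞} P_{T(X_n)} = P_{cl R(T)}. -/
open Filter Topology Metric Submodule ContinuousLinearMap

lemma orthProj_of_hasOrthogonalProjection {H : Type*} [NormedAddCommGroup H]
    [InnerProductSpace ℝ H] (K : Submodule ℝ H) [h : HasOrthogonalProjection K] (x : H) :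
    orthProj K x = (orthogonalProjection K x : H) := by
  simp [orthProj, dif_pos h]

lemma orthProj_min {H : Type*} [NormedAddCommGroup H]
    [InnerProductSpace ℝ H] (K : Submodule ℝ H) [HasOrthogonalProjection K] (x : H)
    {v : H} (hv : v ∈ K) : ‖x - orthProj K x‖ ≤ ‖x - v‖ := by
  rw [orthProj_of_hasOrthogonalProjection, ← Submodule.starProjection_apply, Submodule.starProjection_minimal]
  exact ciInf_le ⟨0, fun r ⟨w, hw⟩ => hw ▸ norm_nonneg _⟩ (⟨v, hv⟩ : K)

variable {X Y : Type*} [NormedAddCommGroup X] [InnerProductSpace ℝ X] [CompleteSpace X]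
  [NormedAddCommGroup Y] [InnerProductSpace ℝ Y] [CompleteSpace Y]

/-- `s-lim P_{T(Xₙ)} = P_{cl R(T)}`. -/
theorem stmt6
    (T : X →L[ℝ] Y) (Xn : ℕ → Submodule ℝ X)
    (hfin : ∀ n, FiniteDimensional ℝ (Xn n))
    (hinf : ¬ FiniteDimensional ℝ X)
    (hproj : ∀ x : X, Tendsto (fun n => orthProj (Xn n) x) atTop (𝓝 x))
    (Tn : ℕ → X →L[ℝ] Y) (hTn : ∀ n, Tn n = T.comp (orthProj (Xn n))) :
    ∀ y : Y, Tendsto (fun n => orthProj ((Xn n).map (T : X →ₗ[ℝ] Y)) y) atTop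
      (𝓝 (orthProj (LinearMap.range (T : X →ₗ[ℝ] Y)).topologicalClosure y)) := by
  intro y
  set M : Submodule ℝ Y := (LinearMap.range (T : X →ₗ[ℝ] Y)).topologicalClosure with hM
  haveI : CompleteSpace M := (LinearMap.range (T : X →ₗ[ℝ] Y)).isClosed_topologicalClosure.completeSpace_coe
  haveI : HasOrthogonalProjection M := inferInstance
  haveI : ∀ n, FiniteDimensional ℝ ((Xn n).map (T : X →ₗ[ℝ] Y)) := fun n => by
    haveI := hfin n
    exact Module.Finite.map _ _
  set z : Y := orthProj M y with hz
  have hzM : z ∈ M := by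
    rw [hz, orthProj_of_hasOrthogonalProjection]; exact (orthogonalProjection M y).2
  have hMn_le : ∀ n, (Xn n).map (T : X →ₗ[ℝ] Y) ≤ M := fun n =>
    le_trans (Submodule.map_le_iff_le_comap.mpr fun x _ => LinearMap.mem_range_self _ x)
      (LinearMap.range (T : X →ₗ[ℝ] Y)).le_topologicalClosure
  -- Projection of y equals projection of z onto each Mn
  have key : ∀ n, orthProj ((Xn n).map (T : X →ₗ[ℝ] Y)) y = orthProj ((Xn n).map (T : X →ₗ[ℝ] Y)) z := by
    intro n
    have hw : y - z ∈ ((Xn n).map (T : X →ₗ[ℝ] Y))ᗮ := by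
      refine Submodule.orthogonal_le (hMn_le n) ?_
      have := Submodule.sub_starProjection_mem_orthogonal (K := M) y
      rw [Submodule.starProjection_apply] at this
      rwa [hz, orthProj_of_hasOrthogonalProjection]
    have : orthProj ((Xn n).map (T : X →ₗ[ℝ] Y)) (y - z) = 0 := by
      rw [orthProj_of_hasOrthogonalProjection, Submodule.orthogonalProjectionOnto_eq_zero_iff.mpr hw,
        Submodule.coe_zero]
    have h2 := map_sub (orthProj ((Xn n).map (T : X →ₗ[ℝ] Y))) y z
    rw [this] at h2
    exact sub_eq_zero.mp h2.symm
  simp only [key]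
  rw [Metric.tendsto_atTop]
  intro eps heps
  -- z is in the closure of the range of T
  have hcl : z ∈ closure ((LinearMap.range (T : X →ₗ[ℝ] Y) : Submodule ℝ Y) : Set Y) := by
    rw [← Submodule.topologicalClosure_coe]
    exact hzM
  obtain ⟨w, hwmem, hwdist⟩ := Metric.mem_closure_iff.mp hcl (eps / 3) (by linarith)
  obtain ⟨x, hx⟩ := LinearMap.mem_range.mp hwmem
  have hTx : Tendsto (fun n => T (orthProj (Xn n) x)) atTop (𝓝 (T x)) :=
    (T.continuous.tendsto _).comp (hproj x)
  have hTx' : Tendsto (fun n => ‖T x - T (orthProj (Xn n) x)‖) atTop (𝓝 0) := by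
    have h := ((tendsto_const_nhds (x := T x) (f := (atTop : Filter ℕ))).sub hTx).norm
    simpa using h
  rw [Metric.tendsto_atTop] at hTx'
  obtain ⟨N, hN⟩ := hTx' (eps / 3) (by linarith)
  refine ⟨N, fun n hn => ?_⟩
  have hN' := hN n hn
  rw [Real.dist_eq, sub_zero, abs_of_nonneg (norm_nonneg _)] at hN'
  have hmem : T (orthProj (Xn n) x) ∈ (Xn n).map (T : X →ₗ[ℝ] Y) := by
    refine Submodule.mem_map_of_mem ?_
    rw [orthProj_of_hasOrthogonalProjection]
    exact (orthogonalProjection (Xn n) x).2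
  have hmin : ‖z - orthProj ((Xn n).map (T : X →ₗ[ℝ] Y)) z‖ ≤ ‖z - T (orthProj (Xn n) x)‖ :=
    orthProj_min _ _ hmem
  have htri : ‖z - T (orthProj (Xn n) x)‖ ≤ ‖z - T x‖ + ‖T x - T (orthProj (Xn n) x)‖ := by
    simpa using norm_sub_le_norm_sub_add_norm_sub z (T x) (T (orthProj (Xn n) x))
  have hzTx : ‖z - T x‖ < eps / 3 := by
    rw [← hx] at hwdist
    rw [← dist_eq_norm]
    exact hwdist
  rw [dist_eq_norm, ← norm_neg, neg_sub]
  calc ‖z - orthProj ((Xn n).map (T : X →ₗ[ℝ] Y)) z‖ ≤ ‖z - T x‖ + ‖T x - T (orthProj (Xn n) x)‖ :=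
        le_trans hmin htri
    _ < eps / 3 + eps / 3 := by linarith
    _ < eps := by linarith
end

section
/- Let X and Y be Hilbert spaces, T : X → Y a bounded linear operator with dim N(T) < ∞, with a least-squares projection approximation {(X_n, T_n)} that has kernel approximability. Then there exists n* ∈ ℕ such that for all n ≥ n*: X_n ⊇ N(T) and N(T_n) = N(T) ⊕ X_n^⊥ (orthogonal direct sum). -/
open Filter Topology Metric Submodule ContinuousLinearMap

variable {X Y : Type*} [NormedAddCommGroup X] [InnerProductSpace ℝ X] [CompleteSpace X]
  [NormedAddCommGroup Y] [InnerProductSpace ℝ Y] [CompleteSpace Y]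

/-- Under kernel approximability and `dim N(T) < ∞`, eventually `N(T) ⊆ Xₙ` and
`N(Tₙ) = N(T) ⊕ Xₙᗮ` orthogonally. -/
theorem stmt10
    (T : X →L[ℝ] Y) (Xn : ℕ → Submodule ℝ X)
    (hfin : ∀ n, FiniteDimensional ℝ (Xn n))
    (hinf : ¬ FiniteDimensional ℝ X)
    (hproj : ∀ x : X, Tendsto (fun n => orthProj (Xn n) x) atTop (𝓝 x))
    (Tn : ℕ → X →L[ℝ] Y) (hTn : ∀ n, Tn n = T.comp (orthProj (Xn n)))
    (hker : FiniteDimensional ℝ (LinearMap.ker (T : X →ₗ[ℝ] Y)))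
    (hKA : (∀ x : X, x ∈ LinearMap.ker (T : X →ₗ[ℝ] Y) ↔
      Tendsto (fun n => Metric.infDist x ((LinearMap.ker (T : X →ₗ[ℝ] Y) ⊓ Xn n : Submodule ℝ X) : Set X))
        atTop (𝓝 0))) :
    ∃ nStar : ℕ, ∀ n ≥ nStar,
      LinearMap.ker (T : X →ₗ[ℝ] Y) ≤ Xn n ∧
      LinearMap.ker (Tn n : X →ₗ[ℝ] Y) = LinearMap.ker (T : X →ₗ[ℝ] Y) ⊔ (Xn n)ᗮ ∧
      (∀ u ∈ LinearMap.ker (T : X →ₗ[ℝ] Y), ∀ v ∈ (Xn n)ᗮ, (inner ℝ u v : ℝ) = 0) := by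
  classical
  haveI : FiniteDimensional ℝ (LinearMap.ker (T : X →ₗ[ℝ] Y)) := hker
  set K := LinearMap.ker (T : X →ₗ[ℝ] Y) with hKdef
  -- finite 1/2-net of the unit sphere of K
  obtain ⟨t, hts, htfin, htcov⟩ :=
    (isCompact_sphere (0 : K) 1).finite_cover_balls (by norm_num : (0:ℝ) < 1/2)
  have hev : ∀ᶠ n in atTop, ∀ c ∈ t,
      infDist (c : X) ((K ⊓ Xn n : Submodule ℝ X) : Set X) < 1/4 := by
    rw [eventually_all_finite htfin]
    intro c _
    have h1 : (c : X) ∈ K := c.2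
    exact ((hKA (c : X)).1 h1).eventually_lt_const (by norm_num)
  obtain ⟨nStar, hnStar⟩ := eventually_atTop.1 hev
  refine ⟨nStar, fun n hn => ?_⟩
  have hnet := hnStar n hn
  -- Step 1 : K ≤ Xn n
  have hle : K ≤ Xn n := by
    by_contra hcon
    set S : Submodule ℝ K := (Xn n).comap K.subtype with hSdef
    haveI : FiniteDimensional ℝ S := inferInstance
    have hStop : S ≠ ⊤ := by
      intro habs
      apply hcon
      intro x hx
      have : (⟨x, hx⟩ : K) ∈ S := habs ▸ Submodule.mem_top
      exact this
    clear hcon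
    have hbot : Sᗮ ≠ ⊥ := by
      intro habs
      exact hStop ((Submodule.orthogonal_eq_bot_iff).1 habs)
    obtain ⟨x, hxS, hx0⟩ := Submodule.exists_mem_ne_zero_of_ne_bot hbot
    set e : K := ‖x‖⁻¹ • x with hedef
    have he1 : ‖e‖ = 1 := norm_smul_inv_norm hx0
    have heS : e ∈ Sᗮ := Submodule.smul_mem _ _ hxS
    have hesph : e ∈ sphere (0 : K) 1 := mem_sphere_zero_iff_norm.2 he1
    obtain ⟨c, hct, hec⟩ := Set.mem_iUnion₂.1 (htcov hesph)
    have hic := hnet c hct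
    have hne : ((K ⊓ Xn n : Submodule ℝ X) : Set X).Nonempty :=
      ⟨0, Submodule.zero_mem _⟩
    obtain ⟨s, hsmem, hds⟩ := (infDist_lt_iff hne).1 hic
    have hsK : s ∈ K := (Submodule.mem_inf.1 hsmem).1
    have hsX : s ∈ Xn n := (Submodule.mem_inf.1 hsmem).2
    -- orthogonality of e and s
    have horth : (inner ℝ (e : X) s : ℝ) = 0 := by
      have hmem : (⟨s, hsK⟩ : K) ∈ S := hsX
      have := (Submodule.mem_orthogonal S e).1 heS ⟨s, hsK⟩ hmem
      have h2 : (inner ℝ s (e : X) : ℝ) = 0 := this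
      rw [real_inner_comm] at h2
      exact h2
    -- lower bound : dist (e : X) s ≥ 1
    have hlow : (1 : ℝ) ≤ dist (e : X) s := by
      have hne2 : ‖(e : X) - s‖ ^ 2 = ‖(e : X)‖ ^ 2 - 2 * inner ℝ (e : X) s + ‖s‖ ^ 2 := by
        exact norm_sub_sq_real _ _
      have heX : ‖(e : X)‖ = 1 := by rw [← Submodule.coe_norm]; exact he1
      rw [horth, heX] at hne2
      have hsq : (1 : ℝ) ≤ ‖(e : X) - s‖ ^ 2 := by
        rw [hne2]; nlinarith [sq_nonneg ‖s‖]
      rw [dist_eq_norm]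
      nlinarith [norm_nonneg ((e : X) - s)]
    -- upper bound
    have hup : dist (e : X) s < 1 := by
      have h3 : dist (e : X) (c : X) < 1/2 := by
        have : dist e c < 1/2 := mem_ball.1 hec
        simpa [Subtype.dist_eq] using this
      calc dist (e : X) s ≤ dist (e : X) (c : X) + dist (c : X) s := dist_triangle _ _ _
        _ < 1/2 + 1/4 := by linarith
        _ < 1 := by norm_num
    linarith
  -- Step 2 : kernel identity
  haveI := hfin n
  haveI : CompleteSpace (Xn n) := FiniteDimensional.complete ℝ _
  haveI hop : HasOrthogonalProjection (Xn n) := inferInstance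
  have hP : orthProj (Xn n) =
      (Xn n).subtypeL.comp (orthogonalProjection (Xn n)) := by
    rw [orthProj, dif_pos hop]
  have hPapp : ∀ x : X, orthProj (Xn n) x = (orthogonalProjection (Xn n) x : X) := by
    intro x; rw [hP]; rfl
  refine ⟨hle, ?_, ?_⟩
  · apply le_antisymm
    · intro x hx
      have hx0 : T (orthProj (Xn n) x) = 0 := by
        have := hx
        rw [LinearMap.mem_ker, hTn n] at this
        exact this
      have hPker : (orthogonalProjection (Xn n) x : X) ∈ K := by
        rw [hKdef, LinearMap.mem_ker, ← hPapp x]; exact hx0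
      have hsub : x - (orthogonalProjection (Xn n) x : X) ∈ (Xn n)ᗮ :=
        Submodule.sub_starProjection_mem_orthogonal x
      have : x = (orthogonalProjection (Xn n) x : X) +
          (x - (orthogonalProjection (Xn n) x : X)) := by abel
      rw [this]
      exact Submodule.add_mem _ (Submodule.mem_sup_left hPker) (Submodule.mem_sup_right hsub)
    · apply sup_le
      · intro u hu
        rw [LinearMap.mem_ker, hTn n, ContinuousLinearMap.coe_coe, ContinuousLinearMap.comp_apply, hPapp,
          ← Submodule.starProjection_apply, Submodule.starProjection_eq_self_iff.2 (hle hu)]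
        exact hu
      · intro v hv
        rw [LinearMap.mem_ker, hTn n, ContinuousLinearMap.coe_coe, ContinuousLinearMap.comp_apply, hPapp,
          Submodule.orthogonalProjectionOnto_apply_of_mem_orthogonal hv]
        simp
  · intro u hu v hv
    exact (Submodule.mem_orthogonal _ v).1 hv u (hle hu)
end

section
/- Let P and Q be orthogonal projections on a Hilbert space H. Then ‖P − Q‖ = max{‖(I − Q)P‖, ‖(I − P)Q‖} ≤ 1, and if moreover ‖P − Q‖ < 1, then ‖P − Q‖ = ‖(I − Q)P‖ = ‖(I − P)Q‖. -/
open Filter Topology Metric Submodule ContinuousLinearMap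

open scoped RealInnerProductSpace

section Aux
variable {A : Type*} [NormedRing A] [StarRing A] [CStarRing A]

lemma norm_conj_le' (a : A) (u : Aˣ) (hb : IsSelfAdjoint ((u : A) * a * ↑u⁻¹)) :
    ‖(u : A) * a * ↑u⁻¹‖ ≤ ‖a‖ := by
  set b : A := (u : A) * a * ↑u⁻¹ with hbdef
  set C : ℝ := ‖(u : A)‖ * ‖(↑u⁻¹ : A)‖ with hC
  have key : ∀ n : ℕ, ‖b‖ ^ 2 ^ n ≤ C * ‖a‖ ^ 2 ^ n := by
    intro n
    have h1 : ‖b ^ 2 ^ n‖ = ‖b‖ ^ 2 ^ n := by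
      have := hb.nnnorm_pow_two_pow n
      calc ‖b ^ 2 ^ n‖ = ((‖b ^ 2 ^ n‖₊ : NNReal) : ℝ) := (coe_nnnorm _).symm
        _ = ((‖b‖₊ ^ 2 ^ n : NNReal) : ℝ) := by rw [this]
        _ = ‖b‖ ^ 2 ^ n := by push_cast; rfl
    have h2 : b ^ 2 ^ n = (u : A) * a ^ 2 ^ n * ↑u⁻¹ := Units.conj_pow u a (2 ^ n)
    calc ‖b‖ ^ 2 ^ n = ‖(u : A) * a ^ 2 ^ n * ↑u⁻¹‖ := by rw [← h1, h2]
      _ ≤ ‖(u : A) * a ^ 2 ^ n‖ * ‖(↑u⁻¹ : A)‖ := norm_mul_le _ _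
      _ ≤ ‖(u : A)‖ * ‖a ^ 2 ^ n‖ * ‖(↑u⁻¹ : A)‖ := by
          gcongr; exact norm_mul_le _ _
      _ ≤ ‖(u : A)‖ * ‖a‖ ^ 2 ^ n * ‖(↑u⁻¹ : A)‖ := by
          have hle : ‖a ^ 2 ^ n‖ ≤ ‖a‖ ^ 2 ^ n := norm_pow_le' a (by positivity)
          gcongr
      _ = C * ‖a‖ ^ 2 ^ n := by ring
  by_contra hlt
  push_neg at hlt
  have hb0 : 0 < ‖b‖ := lt_of_le_of_lt (norm_nonneg a) hlt
  rcases eq_or_lt_of_le (norm_nonneg a) with ha0 | ha0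
  · have : a = 0 := norm_eq_zero.mp ha0.symm
    rw [hbdef, this, mul_zero, zero_mul, norm_zero] at hb0
    exact lt_irrefl _ hb0
  · set r : ℝ := ‖b‖ / ‖a‖ with hr
    have hr1 : 1 < r := (one_lt_div ha0).mpr hlt
    have hrC : ∀ n : ℕ, r ^ 2 ^ n ≤ C := by
      intro n
      rw [hr, div_pow, div_le_iff₀ (by positivity)]
      exact key n
    obtain ⟨n, hn⟩ := ((tendsto_pow_atTop_atTop_of_one_lt hr1).eventually_gt_atTop C).exists
    have : r ^ n ≤ r ^ 2 ^ n := pow_le_pow_right₀ hr1.le (Nat.le_of_lt (Nat.lt_two_pow_self (n := n)))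
    exact absurd (le_trans this (hrC n)) (not_le.mpr hn)

lemma norm_conj_eq' (a : A) (u : Aˣ) (ha : IsSelfAdjoint a)
    (hb : IsSelfAdjoint ((u : A) * a * ↑u⁻¹)) :
    ‖(u : A) * a * ↑u⁻¹‖ = ‖a‖ := by
  refine le_antisymm (norm_conj_le' a u hb) ?_
  have h : a = (↑u⁻¹ : A) * ((u : A) * a * ↑u⁻¹) * ↑(u⁻¹)⁻¹ := by
    simp [mul_assoc]
  calc ‖a‖ = ‖(↑u⁻¹ : A) * ((u : A) * a * ↑u⁻¹) * ↑(u⁻¹)⁻¹‖ := by rw [← h]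
    _ ≤ ‖(u : A) * a * ↑u⁻¹‖ := norm_conj_le' _ u⁻¹ (by rw [← h]; exact ha)

end Aux

section Proj
variable {H : Type*} [NormedAddCommGroup H] [InnerProductSpace ℝ H] [CompleteSpace H]

/-- orthogonality of ranges pointwise -/
lemma inner_apply_eq_zero (a b : H →L[ℝ] H) (h : star a * b = 0) (x : H) :
    ⟪a x, b x⟫ = 0 := by
  have h1 : ⟪x, (ContinuousLinearMap.adjoint a) (b x)⟫ = ⟪a x, b x⟫ :=
    ContinuousLinearMap.adjoint_inner_right a x (b x)
  rw [← h1]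
  have h2 : (ContinuousLinearMap.adjoint a) (b x) = (star a * b) x := rfl
  rw [h2, h, ContinuousLinearMap.zero_apply, inner_zero_right]

lemma proj_apply_norm_le (R : H →L[ℝ] H) (hR : R * R = R) (hRsa : IsSelfAdjoint R) (x : H) :
    ‖R x‖ ≤ ‖x‖ := by
  have hadj : ContinuousLinearMap.adjoint R = R :=
    ContinuousLinearMap.isSelfAdjoint_iff'.mp hRsa
  have hRR : R (R x) = R x := by rw [← ContinuousLinearMap.mul_apply, hR]
  have h1 : ‖R x‖ ^ 2 = ⟪x, R x⟫ := by
    rw [← real_inner_self_eq_norm_sq]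
    calc ⟪R x, R x⟫ = ⟪x, (ContinuousLinearMap.adjoint R) (R x)⟫ := by
          rw [ContinuousLinearMap.adjoint_inner_right]
      _ = ⟪x, R x⟫ := by rw [hadj, hRR]
  have h2 : ⟪x, R x⟫ ≤ ‖x‖ * ‖R x‖ := real_inner_le_norm x (R x)
  by_contra hc
  push_neg at hc
  nlinarith [norm_nonneg (R x), norm_nonneg x]

lemma proj_norm_le (R : H →L[ℝ] H) (hR : R * R = R) (hRsa : IsSelfAdjoint R) : ‖R‖ ≤ 1 :=
  ContinuousLinearMap.opNorm_le_bound R zero_le_one fun x => by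
    simpa using proj_apply_norm_le R hR hRsa x

end Proj


/-- For orthogonal projections `P, Q`:
`‖P − Q‖ = max {‖(I−Q)P‖, ‖(I−P)Q‖} ≤ 1`, and if `‖P − Q‖ < 1` then
`‖P − Q‖ = ‖(I−Q)P‖ = ‖(I−P)Q‖`. -/
theorem stmt12 {H : Type*} [NormedAddCommGroup H] [InnerProductSpace ℝ H] [CompleteSpace H]
    (P Q : H →L[ℝ] H)
    (hP : P.comp P = P) (hPsa : IsSelfAdjoint P)
    (hQ : Q.comp Q = Q) (hQsa : IsSelfAdjoint Q) :
    ‖P - Q‖ = max ‖(1 - Q).comp P‖ ‖(1 - P).comp Q‖ ∧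
    ‖P - Q‖ ≤ 1 ∧
    (‖P - Q‖ < 1 →
      ‖P - Q‖ = ‖(1 - Q).comp P‖ ∧ ‖P - Q‖ = ‖(1 - P).comp Q‖) := by
  simp only [← ContinuousLinearMap.mul_def] at hP hQ ⊢
  have hPr : ∀ x : H →L[ℝ] H, P * (P * x) = P * x := fun x => by rw [← mul_assoc, hP]
  have hQr : ∀ x : H →L[ℝ] H, Q * (Q * x) = Q * x := fun x => by rw [← mul_assoc, hQ]
  have hP1 : ‖P‖ ≤ 1 := proj_norm_le P hP hPsa
  have hQ1 : ‖Q‖ ≤ 1 := proj_norm_le Q hQ hQsa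
  have hP' : (1 - P) * (1 - P) = 1 - P := by
    simp only [mul_sub, sub_mul, mul_one, one_mul, hP]; abel
  have hQ' : (1 - Q) * (1 - Q) = 1 - Q := by
    simp only [mul_sub, sub_mul, mul_one, one_mul, hQ]; abel
  have hPsa' : IsSelfAdjoint ((1 : H →L[ℝ] H) - P) := (IsSelfAdjoint.one (H →L[ℝ] H)).sub hPsa
  have hQsa' : IsSelfAdjoint ((1 : H →L[ℝ] H) - Q) := (IsSelfAdjoint.one (H →L[ℝ] H)).sub hQsa
  set c : ℝ := ‖(1 - Q) * P‖ with hc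
  set d : ℝ := ‖(1 - P) * Q‖ with hd
  set M : ℝ := max c d with hM
  -- star computations
  have hstar_a : star ((1 - Q) * P) = P * (1 - Q) := by
    rw [star_mul, hPsa.star_eq, hQsa'.star_eq]
  have hstar_b : star (Q * (1 - P)) = (1 - P) * Q := by
    rw [star_mul, hQsa.star_eq, hPsa'.star_eq]
  have hbd : ‖Q * (1 - P)‖ = d := by rw [← norm_star (Q * (1 - P)), hstar_b]
  -- Part A : ‖P - Q‖ ≤ M
  have hM0 : (0 : ℝ) ≤ M := le_trans (norm_nonneg _) (le_max_left c d)
  have hA : ‖P - Q‖ ≤ M := by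
    refine ContinuousLinearMap.opNorm_le_bound _ hM0 fun x => ?_
    have hab : P - Q = (1 - Q) * P - Q * (1 - P) := by noncomm_ring
    have h0 : star ((1 - Q) * P) * (Q * (1 - P)) = 0 := by
      rw [hstar_a]
      have hz : (1 - Q) * Q = 0 := by rw [sub_mul, one_mul, hQ, sub_self]
      rw [mul_assoc, ← mul_assoc (1 - Q), hz, zero_mul, mul_zero]
    have horth : ⟪((1 - Q) * P) x, (Q * (1 - P)) x⟫ = 0 :=
      inner_apply_eq_zero _ _ h0 x
    have hx2 : ‖(P - Q) x‖ ^ 2 = ‖((1 - Q) * P) x‖ ^ 2 + ‖(Q * (1 - P)) x‖ ^ 2 := by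
      rw [hab, ContinuousLinearMap.sub_apply, norm_sub_sq_real, horth]; ring
    have ha_le : ‖((1 - Q) * P) x‖ ≤ c * ‖P x‖ := by
      have haP : ((1 - Q) * P) * P = (1 - Q) * P := by rw [mul_assoc, hP]
      calc ‖((1 - Q) * P) x‖ = ‖((1 - Q) * P) (P x)‖ := by
            conv_lhs => rw [← haP]
            rw [ContinuousLinearMap.mul_apply]
        _ ≤ c * ‖P x‖ := ContinuousLinearMap.le_opNorm _ _
    have hb_le : ‖(Q * (1 - P)) x‖ ≤ d * ‖(1 - P) x‖ := by
      have hbP : (Q * (1 - P)) * (1 - P) = Q * (1 - P) := by rw [mul_assoc, hP']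
      calc ‖(Q * (1 - P)) x‖ = ‖(Q * (1 - P)) ((1 - P) x)‖ := by
            conv_lhs => rw [← hbP]
            rw [ContinuousLinearMap.mul_apply]
        _ ≤ ‖Q * (1 - P)‖ * ‖(1 - P) x‖ := ContinuousLinearMap.le_opNorm _ _
        _ = d * ‖(1 - P) x‖ := by rw [hbd]
    have hpyth : ‖P x‖ ^ 2 + ‖(1 - P) x‖ ^ 2 = ‖x‖ ^ 2 := by
      have h0' : star P * (1 - P) = 0 := by
        rw [hPsa.star_eq, mul_sub, mul_one, hP, sub_self]
      have horth' : ⟪P x, (1 - P) x⟫ = 0 := inner_apply_eq_zero _ _ h0' x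
      have hsum : P x + (1 - P) x = x := by
        simp [ContinuousLinearMap.sub_apply]
      calc ‖P x‖ ^ 2 + ‖(1 - P) x‖ ^ 2
          = ‖P x + (1 - P) x‖ ^ 2 := by rw [norm_add_sq_real, horth']; ring
        _ = ‖x‖ ^ 2 := by rw [hsum]
    have hcM : c ≤ M := le_max_left c d
    have hdM : d ≤ M := le_max_right c d
    have e1 : ‖((1 - Q) * P) x‖ ^ 2 ≤ (c * ‖P x‖) ^ 2 :=
      pow_le_pow_left₀ (norm_nonneg _) ha_le 2
    have e2 : ‖(Q * (1 - P)) x‖ ^ 2 ≤ (d * ‖(1 - P) x‖) ^ 2 :=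
      pow_le_pow_left₀ (norm_nonneg _) hb_le 2
    have e3 : c ^ 2 ≤ M ^ 2 := pow_le_pow_left₀ (norm_nonneg _) hcM 2
    have e4 : d ^ 2 ≤ M ^ 2 := pow_le_pow_left₀ (norm_nonneg _) hdM 2
    have hfin : ‖(P - Q) x‖ ^ 2 ≤ (M * ‖x‖) ^ 2 := by
      calc ‖(P - Q) x‖ ^ 2 = ‖((1 - Q) * P) x‖ ^ 2 + ‖(Q * (1 - P)) x‖ ^ 2 := hx2
        _ ≤ (c * ‖P x‖) ^ 2 + (d * ‖(1 - P) x‖) ^ 2 := add_le_add e1 e2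
        _ = c ^ 2 * ‖P x‖ ^ 2 + d ^ 2 * ‖(1 - P) x‖ ^ 2 := by ring
        _ ≤ M ^ 2 * ‖P x‖ ^ 2 + M ^ 2 * ‖(1 - P) x‖ ^ 2 :=
            add_le_add (mul_le_mul_of_nonneg_right e3 (sq_nonneg _))
              (mul_le_mul_of_nonneg_right e4 (sq_nonneg _))
        _ = M ^ 2 * (‖P x‖ ^ 2 + ‖(1 - P) x‖ ^ 2) := by ring
        _ = (M * ‖x‖) ^ 2 := by rw [hpyth]; ring
    exact (pow_le_pow_iff_left₀ (norm_nonneg _) (by positivity) two_ne_zero).mp hfin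
  -- Part B : M ≤ ‖P - Q‖
  have hBc : c ≤ ‖P - Q‖ := by
    have h1 : (1 - Q) * P = (P - Q) * P := by rw [sub_mul, sub_mul, one_mul, hP]
    calc c = ‖(P - Q) * P‖ := by rw [hc, h1]
      _ ≤ ‖P - Q‖ * ‖P‖ := norm_mul_le _ _
      _ ≤ ‖P - Q‖ * 1 := by gcongr
      _ = ‖P - Q‖ := mul_one _
  have hBd : d ≤ ‖P - Q‖ := by
    have h1 : (1 - P) * Q = (Q - P) * Q := by rw [sub_mul, sub_mul, one_mul, hQ]
    calc d = ‖(Q - P) * Q‖ := by rw [hd, h1]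
      _ ≤ ‖Q - P‖ * ‖Q‖ := norm_mul_le _ _
      _ ≤ ‖Q - P‖ * 1 := by gcongr
      _ = ‖P - Q‖ := by rw [mul_one, norm_sub_rev]
  have heq : ‖P - Q‖ = M := le_antisymm hA (max_le hBc hBd)
  -- ≤ 1
  have hle1 : ‖P - Q‖ ≤ 1 := by
    rw [heq]
    refine max_le ?_ ?_
    · calc c ≤ ‖(1 : H →L[ℝ] H) - Q‖ * ‖P‖ := norm_mul_le _ _
        _ ≤ 1 * 1 := mul_le_mul (proj_norm_le _ hQ' hQsa') hP1 (norm_nonneg _) zero_le_one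
        _ = 1 := mul_one 1
    · calc d ≤ ‖(1 : H →L[ℝ] H) - P‖ * ‖Q‖ := norm_mul_le _ _
        _ ≤ 1 * 1 := mul_le_mul (proj_norm_le _ hP' hPsa') hQ1 (norm_nonneg _) zero_le_one
        _ = 1 := mul_one 1
  refine ⟨heq, hle1, fun hlt => ?_⟩
  -- Part C : the hard part
  have hT2 : ‖(P - Q) ^ 2‖ < 1 := by
    have : ‖(P - Q) ^ 2‖ ≤ ‖P - Q‖ * ‖P - Q‖ := by rw [sq]; exact norm_mul_le _ _
    nlinarith [norm_nonneg (P - Q)]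
  set V : H →L[ℝ] H := Q * P + (1 - Q) * (1 - P) with hV
  have hVstar : star V = P * Q + (1 - P) * (1 - Q) := by
    rw [hV, star_add, star_mul, star_mul, hPsa.star_eq, hQsa.star_eq,
      hPsa'.star_eq, hQsa'.star_eq]
  have hVV : star V * V = 1 - (P - Q) ^ 2 := by
    rw [hVstar, hV]
    simp only [sq, mul_sub, sub_mul, mul_add, add_mul, mul_one, one_mul, mul_assoc,
      hP, hQ, hPr, hQr]
    abel
  have hVV' : V * star V = 1 - (P - Q) ^ 2 := by
    rw [hVstar, hV]
    simp only [sq, mul_sub, sub_mul, mul_add, add_mul, mul_one, one_mul, mul_assoc,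
      hP, hQ, hPr, hQr]
    abel
  have hVP : V * P = Q * V := by
    rw [hV]
    simp only [sq, mul_sub, sub_mul, mul_add, add_mul, mul_one, one_mul, mul_assoc,
      hP, hQ, hPr, hQr]
    abel
  have hSV : (1 - (P - Q) ^ 2) * V = V * (1 - (P - Q) ^ 2) := by
    conv_lhs => rw [← hVV']
    conv_rhs => rw [← hVV]
    rw [mul_assoc]
  have hTV : (P - Q) ^ 2 * V = V * ((P - Q) ^ 2) := by
    have := hSV
    simp only [sub_mul, mul_sub, one_mul, mul_one] at this
    have h2 : V - (P - Q) ^ 2 * V = V - V * (P - Q) ^ 2 := this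
    exact sub_right_inj.mp h2
  set uS : (H →L[ℝ] H)ˣ := Units.oneSub ((P - Q) ^ 2) hT2 with huS
  have huSval : (uS : H →L[ℝ] H) = 1 - (P - Q) ^ 2 := rfl
  have hcommS : Commute ((uS : H →L[ℝ] H)) V := by
    show (uS : H →L[ℝ] H) * V = V * uS
    rw [huSval]; exact hSV
  have hcommSinv : (↑uS⁻¹ : H →L[ℝ] H) * V = V * ↑uS⁻¹ := hcommS.units_inv_left
  set u : (H →L[ℝ] H)ˣ :=
    { val := V
      inv := star V * ↑uS⁻¹
      val_inv := by rw [← mul_assoc, hVV', ← huSval]; exact uS.mul_inv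
      inv_val := by
        rw [mul_assoc, hcommSinv, ← mul_assoc, hVV, ← huSval]; exact uS.mul_inv } with hu
  have huval : (u : H →L[ℝ] H) = V := rfl
  have hPT : P * (P - Q) ^ 2 = (P - Q) ^ 2 * P := by
    simp only [sq, mul_sub, sub_mul, mul_add, add_mul, mul_one, one_mul, mul_assoc,
      hP, hQ, hPr, hQr]
    abel
  have hQT : Q * (P - Q) ^ 2 = (P - Q) ^ 2 * Q := by
    simp only [sq, mul_sub, sub_mul, mul_add, add_mul, mul_one, one_mul, mul_assoc,
      hP, hQ, hPr, hQr]
    abel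
  have hTsa : IsSelfAdjoint ((P - Q) ^ 2) := (hPsa.sub hQsa).pow 2
  have hTPsa : IsSelfAdjoint ((P - Q) ^ 2 * P) := by
    rw [IsSelfAdjoint, star_mul, hPsa.star_eq, hTsa.star_eq, hPT]
  have hTQsa : IsSelfAdjoint ((P - Q) ^ 2 * Q) := by
    rw [IsSelfAdjoint, star_mul, hQsa.star_eq, hTsa.star_eq, hQT]
  have hconj : (u : H →L[ℝ] H) * ((P - Q) ^ 2 * P) * ↑u⁻¹ = (P - Q) ^ 2 * Q := by
    have h1 : V * ((P - Q) ^ 2 * P) = (P - Q) ^ 2 * Q * V := by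
      rw [← mul_assoc, ← hTV, mul_assoc, hVP, ← mul_assoc]
    rw [huval, h1, mul_assoc]
    have : V * ↑u⁻¹ = 1 := u.mul_inv
    rw [this, mul_one]
  have hnorm_eq : ‖(P - Q) ^ 2 * Q‖ = ‖(P - Q) ^ 2 * P‖ := by
    rw [← hconj]
    exact norm_conj_eq' _ u hTPsa (by rw [hconj]; exact hTQsa)
  have hc2 : c * c = ‖(P - Q) ^ 2 * P‖ := by
    have h5 : (P * (1 - Q)) * ((1 - Q) * P) = (P - Q) ^ 2 * P := by
      simp only [sq, mul_sub, sub_mul, mul_add, add_mul, mul_one, one_mul, mul_assoc,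
        hP, hQ, hPr, hQr]
      abel
    rw [← h5, ← hstar_a, hc]
    exact CStarRing.norm_star_mul_self.symm
  have hd2 : d * d = ‖(P - Q) ^ 2 * Q‖ := by
    have h6 : (Q * (1 - P)) * ((1 - P) * Q) = (P - Q) ^ 2 * Q := by
      simp only [sq, mul_sub, sub_mul, mul_add, add_mul, mul_one, one_mul, mul_assoc,
        hP, hQ, hPr, hQr]
      abel
    have : star ((1 - P) * Q) = Q * (1 - P) := by
      rw [star_mul, hQsa.star_eq, hPsa'.star_eq]
    rw [← h6, ← this, hd]
    exact CStarRing.norm_star_mul_self.symm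
  have hcd : c = d := by
    have h1 : c * c = d * d := by rw [hc2, hd2, hnorm_eq]
    rcases mul_self_eq_mul_self_iff.mp h1 with h | h
    · exact h
    · have hc0 : 0 ≤ c := norm_nonneg _
      have hd0 : 0 ≤ d := norm_nonneg _
      linarith
  constructor
  · rw [heq, hM, hcd, max_self]
  · rw [heq, hM, hcd, max_self]
end
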